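/- For real α ≥ 0, ε ≥ 0 and real β, γ, ν > 0, ∫₀¹ e^{-αx} x^{β-1}(1-x)^{γ-1} ₀F₁(;ν;εx) dx = e^{-α} (Γ(β)Γ(γ)/Γ(β+γ)) Σ_{k,l≥0} (α^k ε^l / (k! l! (ν)_l)) · ((γ)_k (β)_l / (β+γ)_{k+l}). -/

import Mathlib

open Real MeasureTheory

/-- Pochhammer (rising factorial) symbol on the reals. -/
noncomputable def poch (x : ℝ) (k : ℕ) : ℝ := (ascPochhammer ℝ k).eval x

lemma poch_zero (x : ℝ) : poch x 0 = 1 := by simp [poch]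

lemma poch_succ (x : ℝ) (k : ℕ) : poch x (k+1) = poch x k * (x + k) := by
  simp [poch, ascPochhammer_succ_eval]

lemma poch_pos {x : ℝ} (hx : 0 < x) (k : ℕ) : 0 < poch x k := by
  induction k with
  | zero => simp [poch_zero]
  | succ n ih => rw [poch_succ]; positivity

lemma poch_mono {x y : ℝ} (hx : 0 < x) (hxy : x ≤ y) (k : ℕ) : poch x k ≤ poch y k := by
  induction k with
  | zero => simp [poch_zero]
  | succ n ih =>
    rw [poch_succ, poch_succ]
    nlinarith [poch_pos hx n, Nat.cast_nonneg (α := ℝ) n]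

lemma poch_add (x : ℝ) (k l : ℕ) : poch x (k + l) = poch x k * poch (x + k) l := by
  induction l with
  | zero => simp [poch_zero]
  | succ n ih =>
    rw [← add_assoc, poch_succ, ih, poch_succ]
    push_cast; ring

lemma min_le_poch {x : ℝ} (hx : 0 < x) (k : ℕ) : min x 1 ≤ poch x k := by
  induction k with
  | zero => simp [poch_zero]
  | succ n ih =>
    rw [poch_succ]
    rcases Nat.eq_zero_or_pos n with h | h
    · simp [h, poch_zero, min_le_iff]
    · calc min x 1 ≤ poch x n * 1 := by simpa using ih
        _ ≤ poch x n * (x + n) := by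
            have h1 : (1:ℝ) ≤ x + n := by
              have : (1:ℝ) ≤ (n:ℝ) := by exact_mod_cast h
              linarith
            exact mul_le_mul_of_nonneg_left h1 (poch_pos hx n).le

lemma Gamma_add_nat {x : ℝ} (hx : 0 < x) (n : ℕ) :
    Real.Gamma (x + n) = Real.Gamma x * poch x n := by
  induction n with
  | zero => simp [poch_zero]
  | succ n ih =>
    have h1 : x + ((n:ℕ)+1 : ℕ) = (x + n) + 1 := by push_cast; ring
    rw [h1, Real.Gamma_add_one (by positivity), ih, poch_succ]; ring

lemma real_exp_tsum (y : ℝ) : Real.exp y = ∑' k : ℕ, y ^ k / k.factorial := by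
  rw [Real.exp_eq_exp_ℝ, NormedSpace.exp_eq_tsum_div]

lemma summable_norm_exp (y : ℝ) : Summable (fun k : ℕ => ‖y ^ k / k.factorial‖) := by
  refine (Real.summable_pow_div_factorial |y|).congr fun k => ?_
  rw [norm_div, norm_pow, Real.norm_eq_abs, Real.norm_natCast]

lemma summable_norm_b {ν : ℝ} (hν : 0 < ν) (e : ℝ) :
    Summable (fun l : ℕ => ‖e ^ l / (poch ν l * l.factorial)‖) := by
  have hm : 0 < min ν 1 := lt_min hν one_pos
  refine Summable.of_nonneg_of_le (fun l => norm_nonneg _)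
    (fun l => ?_) (((Real.summable_pow_div_factorial |e|).mul_left (min ν 1)⁻¹))
  have hp := poch_pos hν l
  have hf : (0:ℝ) < l.factorial := by positivity
  rw [norm_div, norm_pow, Real.norm_eq_abs, Real.norm_eq_abs,
    abs_of_pos (by positivity : (0:ℝ) < poch ν l * l.factorial)]
  rw [div_le_iff₀ (by positivity)]
  have h1 : (min ν 1)⁻¹ * (|e| ^ l / ↑l.factorial) * (poch ν l * ↑l.factorial)
      = |e| ^ l * (poch ν l / min ν 1) := by field_simp
  rw [h1]
  have h2 : (1:ℝ) ≤ poch ν l / min ν 1 := (one_le_div hm).mpr (min_le_poch hν l)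
  nlinarith [pow_nonneg (abs_nonneg e) l]

lemma summable_b {ν : ℝ} (hν : 0 < ν) (e : ℝ) :
    Summable (fun l : ℕ => e ^ l / (poch ν l * l.factorial)) :=
  (summable_norm_b hν e).of_norm
lemma beta_eqon {p q : ℝ} :
    Set.EqOn (fun x : ℝ => (x : ℂ) ^ ((p:ℂ) - 1) * (1 - (x : ℂ)) ^ ((q:ℂ) - 1))
      (fun x : ℝ => ((x ^ (p-1) * (1-x) ^ (q-1) : ℝ) : ℂ)) (Set.uIcc 0 1) := by
  intro x hx
  rw [Set.uIcc_of_le zero_le_one] at hx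
  obtain ⟨hx0, hx1⟩ := hx
  have h1x : (0:ℝ) ≤ 1 - x := by linarith
  simp only
  rw [Complex.ofReal_mul, Complex.ofReal_cpow hx0, Complex.ofReal_cpow h1x]
  push_cast
  ring

lemma beta_integrableOn {p q : ℝ} (hp : 0 < p) (hq : 0 < q) :
    IntegrableOn (fun x : ℝ => x ^ (p-1) * (1-x) ^ (q-1)) (Set.Ioo 0 1) := by
  have h := Complex.betaIntegral_convergent (u := (p:ℂ)) (v := (q:ℂ)) (by simpa) (by simpa)
  have h2 : IntegrableOn
      (fun x : ℝ => (x : ℂ) ^ ((p:ℂ) - 1) * (1 - (x : ℂ)) ^ ((q:ℂ) - 1)) (Set.Ioo 0 1) :=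
    (intervalIntegrable_iff_integrableOn_Ioo_of_le zero_le_one).mp h
  refine IntegrableOn.congr_fun h2.norm (fun x hx => ?_) measurableSet_Ioo
  obtain ⟨hx0, hx1⟩ := hx
  have h1x : (0:ℝ) < 1 - x := by linarith
  simp only [norm_mul]
  rw [show ((1:ℂ) - (x:ℂ)) = ((1 - x : ℝ) : ℂ) by push_cast; ring]
  rw [Complex.norm_cpow_eq_rpow_re_of_pos hx0, Complex.norm_cpow_eq_rpow_re_of_pos h1x]
  norm_num

lemma beta_eval {p q : ℝ} (hp : 0 < p) (hq : 0 < q) :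
    ∫ x in Set.Ioo (0:ℝ) 1, x ^ (p-1) * (1-x) ^ (q-1) =
      Real.Gamma p * Real.Gamma q / Real.Gamma (p+q) := by
  have h := Complex.Gamma_mul_Gamma_eq_betaIntegral (s := (p:ℂ)) (t := (q:ℂ))
    (by simpa) (by simpa)
  have hbeta : Complex.betaIntegral p q =
      ((∫ x in Set.Ioo (0:ℝ) 1, x ^ (p-1) * (1-x) ^ (q-1) : ℝ) : ℂ) := by
    rw [Complex.betaIntegral, intervalIntegral.integral_congr beta_eqon,
      intervalIntegral.integral_ofReal, intervalIntegral.integral_of_le zero_le_one,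
      integral_Ioc_eq_integral_Ioo]
  rw [hbeta, Complex.Gamma_ofReal, Complex.Gamma_ofReal, ← Complex.ofReal_mul,
    ← Complex.ofReal_add, Complex.Gamma_ofReal, ← Complex.ofReal_mul] at h
  have := Complex.ofReal_inj.mp h
  have hG : Real.Gamma (p+q) ≠ 0 := (Real.Gamma_pos_of_pos (by linarith)).ne'
  field_simp
  linarith [this]

lemma gamma_ratio {β γ : ℝ} (hβ : 0 < β) (hγ : 0 < γ) (k l : ℕ) :
    Real.Gamma (β + l) * Real.Gamma (γ + k) / Real.Gamma ((β + l) + (γ + k)) =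
      (Real.Gamma β * Real.Gamma γ / Real.Gamma (β + γ)) *
        (poch β l * poch γ k / poch (β + γ) (k + l)) := by
  have h1 : (β + l) + (γ + k) = (β + γ) + ((k + l : ℕ) : ℝ) := by push_cast; ring
  rw [Gamma_add_nat hβ, Gamma_add_nat hγ, h1, Gamma_add_nat (by linarith)]
  have hb := (Real.Gamma_pos_of_pos hβ).ne'
  have hg := (Real.Gamma_pos_of_pos hγ).ne'
  have hbg := (Real.Gamma_pos_of_pos (by linarith : (0:ℝ) < β + γ)).ne'
  have hp := (poch_pos (by linarith : (0:ℝ) < β + γ) (k + l)).ne'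
  field_simp

lemma ratio_le_one {β γ : ℝ} (hβ : 0 < β) (hγ : 0 < γ) (k l : ℕ) :
    poch β l * poch γ k / poch (β + γ) (k + l) ≤ 1 := by
  rw [div_le_one (poch_pos (by linarith) _)]
  have h1 : poch (β + γ) (k + l) = poch (β + γ) l * poch (β + γ + l) k := by
    rw [add_comm k l, poch_add]
  rw [h1]
  have h2 : poch β l ≤ poch (β + γ) l := poch_mono hβ (by linarith) l
  have h3 : poch γ k ≤ poch (β + γ + l) k := poch_mono hγ (by have := Nat.cast_nonneg (α := ℝ) l; linarith) k
  have := poch_pos hβ l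
  have := poch_pos hγ k
  nlinarith

theorem r_function_general (α ε β γ ν : ℝ) (hα : 0 ≤ α) (hε : 0 ≤ ε)
    (hβ : 0 < β) (hγ : 0 < γ) (hν : 0 < ν) :
    ∫ x in Set.Ioo (0:ℝ) 1,
        Real.exp (-α * x) * x ^ (β - 1) * (1 - x) ^ (γ - 1) *
          (∑' l : ℕ, (ε * x) ^ l / (poch ν l * l.factorial)) =
      Real.exp (-α) * (Real.Gamma β * Real.Gamma γ / Real.Gamma (β + γ)) *
        ∑' kl : ℕ × ℕ,
          (α ^ kl.1 * ε ^ kl.2 / (kl.1.factorial * kl.2.factorial * poch ν kl.2)) *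
            (poch γ kl.1 * poch β kl.2 / poch (β + γ) (kl.1 + kl.2)) := by
  have hβγ : (0:ℝ) < β + γ := by linarith
  set B := Real.Gamma β * Real.Gamma γ / Real.Gamma (β + γ) with hB
  have hBpos : 0 < B := div_pos (mul_pos (Real.Gamma_pos_of_pos hβ) (Real.Gamma_pos_of_pos hγ))
    (Real.Gamma_pos_of_pos hβγ)
  set c : ℕ × ℕ → ℝ := fun kl =>
    Real.exp (-α) * (α ^ kl.1 / kl.1.factorial) *
      (ε ^ kl.2 / (poch ν kl.2 * kl.2.factorial)) with hc
  set g : ℕ × ℕ → ℝ → ℝ := fun kl x =>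
    c kl * (x ^ (β + kl.2 - 1) * (1 - x) ^ (γ + kl.1 - 1)) with hg
  have hcpos : ∀ kl : ℕ × ℕ, 0 ≤ c kl := fun kl => by
    have h := poch_pos hν kl.2
    rw [hc]
    positivity
  have hpt : ∀ x ∈ Set.Ioo (0:ℝ) 1,
      Real.exp (-α * x) * x ^ (β - 1) * (1 - x) ^ (γ - 1) *
        (∑' l : ℕ, (ε * x) ^ l / (poch ν l * l.factorial)) = ∑' kl : ℕ × ℕ, g kl x := by
    intro x hx
    obtain ⟨hx0, hx1⟩ := hx
    have h1x : (0:ℝ) < 1 - x := by linarith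
    have hexp : Real.exp (-α * x) = Real.exp (-α) * Real.exp (α * (1 - x)) := by
      rw [← Real.exp_add]; ring_nf
    have ha := summable_norm_exp (α * (1 - x))
    have hb := summable_norm_b hν (ε * x)
    rw [hexp, real_exp_tsum (α * (1 - x))]
    rw [show Real.exp (-α) * (∑' k : ℕ, (α * (1 - x)) ^ k / k.factorial) * x ^ (β - 1) *
          (1 - x) ^ (γ - 1) * (∑' l : ℕ, (ε * x) ^ l / (poch ν l * l.factorial)) =
        (Real.exp (-α) * (x ^ (β - 1) * (1 - x) ^ (γ - 1))) *
          ((∑' k : ℕ, (α * (1 - x)) ^ k / k.factorial) *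
            (∑' l : ℕ, (ε * x) ^ l / (poch ν l * l.factorial))) from by ring]
    rw [tsum_mul_tsum_of_summable_norm ha hb, ← tsum_mul_left]
    refine tsum_congr fun kl => ?_
    obtain ⟨k, l⟩ := kl
    simp only [hg, hc]
    have e1 : x ^ (β + (l:ℝ) - 1) = x ^ (β - 1) * x ^ (l:ℕ) := by
      rw [show β + (l:ℝ) - 1 = (β - 1) + l by ring, Real.rpow_add hx0, Real.rpow_natCast]
    have e2 : (1 - x) ^ (γ + (k:ℝ) - 1) = (1 - x) ^ (γ - 1) * (1 - x) ^ (k:ℕ) := by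
      rw [show γ + (k:ℝ) - 1 = (γ - 1) + k by ring, Real.rpow_add h1x, Real.rpow_natCast]
    rw [e1, e2]
    have h1 : (k.factorial : ℝ) ≠ 0 := by positivity
    have h2 : (l.factorial : ℝ) ≠ 0 := by positivity
    have h3 : poch ν l ≠ 0 := (poch_pos hν _).ne'
    simp only [mul_pow]
    field_simp
  rw [setIntegral_congr_fun measurableSet_Ioo fun x hx => hpt x hx]
  have hint : ∀ kl : ℕ × ℕ, Integrable (g kl) (volume.restrict (Set.Ioo 0 1)) := fun kl => by
    have h := (beta_integrableOn (p := β + kl.2) (q := γ + kl.1)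
      (by positivity) (by positivity)).const_mul (c kl)
    simpa [hg] using h
  have hval : ∀ kl : ℕ × ℕ, (∫ x in Set.Ioo (0:ℝ) 1, g kl x) =
      c kl * (Real.Gamma (β + kl.2) * Real.Gamma (γ + kl.1) /
        Real.Gamma ((β + kl.2) + (γ + kl.1))) := fun kl => by
    simp only [hg]
    rw [MeasureTheory.integral_const_mul, beta_eval (by positivity) (by positivity)]
  have hnorm : ∀ kl : ℕ × ℕ, (∫ x in Set.Ioo (0:ℝ) 1, ‖g kl x‖) =
      ∫ x in Set.Ioo (0:ℝ) 1, g kl x := fun kl => by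
    refine setIntegral_congr_fun measurableSet_Ioo (fun x hx => ?_)
    have hnn : 0 ≤ g kl x := by
      rw [hg]
      exact mul_nonneg (hcpos kl) (mul_nonneg (Real.rpow_nonneg hx.1.le _)
        (Real.rpow_nonneg (by linarith [hx.2]) _))
    rw [Real.norm_eq_abs, abs_of_nonneg hnn]
  have hsummand_eq : ∀ kl : ℕ × ℕ,
      c kl * (Real.Gamma (β + kl.2) * Real.Gamma (γ + kl.1) /
          Real.Gamma ((β + kl.2) + (γ + kl.1))) =
        Real.exp (-α) * B *
          ((α ^ kl.1 * ε ^ kl.2 / (kl.1.factorial * kl.2.factorial * poch ν kl.2)) *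
            (poch γ kl.1 * poch β kl.2 / poch (β + γ) (kl.1 + kl.2))) := fun kl => by
    rw [gamma_ratio hβ hγ kl.1 kl.2, hc]
    have h1 : (kl.1.factorial : ℝ) ≠ 0 := by positivity
    have h2 : (kl.2.factorial : ℝ) ≠ 0 := by positivity
    have h3 : poch ν kl.2 ≠ 0 := (poch_pos hν _).ne'
    have h4 : poch (β + γ) (kl.1 + kl.2) ≠ 0 := (poch_pos hβγ _).ne'
    rw [← hB]
    field_simp
  have hS : Summable (fun kl : ℕ × ℕ => ∫ x in Set.Ioo (0:ℝ) 1, ‖g kl x‖) := by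
    refine Summable.congr ?_ (fun kl => ((hnorm kl).trans (hval kl)).symm)
    have hsc : Summable (fun kl : ℕ × ℕ => B * c kl) := by
      have hf : Summable (fun k : ℕ => Real.exp (-α) * (α ^ k / k.factorial)) :=
        ((Real.summable_pow_div_factorial α).mul_left _)
      have hg2 : Summable (fun l : ℕ => ε ^ l / (poch ν l * l.factorial)) := summable_b hν ε
      have hprod := hf.mul_of_nonneg hg2 (fun k => by positivity)
        (fun l => by have := poch_pos hν l; positivity)
      exact ((hprod.mul_left B).congr fun kl => by rw [hc]; try ring)
    refine Summable.of_nonneg_of_le (fun kl => ?_) (fun kl => ?_) hsc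
    · exact mul_nonneg (hcpos kl) (div_nonneg
        (mul_nonneg (Real.Gamma_pos_of_pos (by positivity)).le
          (Real.Gamma_pos_of_pos (by positivity)).le)
        (Real.Gamma_pos_of_pos (by positivity)).le)
    · rw [gamma_ratio hβ hγ kl.1 kl.2, ← hB]
      have hr1 := ratio_le_one hβ hγ kl.1 kl.2
      calc c kl * (B * (poch β kl.2 * poch γ kl.1 / poch (β + γ) (kl.1 + kl.2)))
          ≤ c kl * (B * 1) :=
            mul_le_mul_of_nonneg_left (mul_le_mul_of_nonneg_left hr1 hBpos.le) (hcpos kl)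
        _ = B * c kl := by ring
  rw [← MeasureTheory.integral_tsum_of_summable_integral_norm hint hS]
  rw [tsum_congr (fun kl => (hval kl).trans (hsummand_eq kl))]
  rw [tsum_mul_left]
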